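/- arXiv:2602.21390 — 2 statements merged into one kernel-verified Lean document; each statement's English description precedes it below -/
import Mathlib

section
/- (Corollary 4.2, multiclass outcomes.) Let H₀ be a real Hilbert space, φ : X × ℝ^d → H₀ with ‖φ(x,p)‖² ≤ G for all x ∈ X and p ∈ Δ^d, where Δ^d := {p ∈ ℝ^d : p_j ≥ 0, Σ_j p_j = 1} is the probability simplex. Let Φ(x,p) : ℝ^d → H₀^d be θ ↦ (θ_1·φ(x,p), …, θ_d·φ(x,p)). Take Z = Δ^d, let y_1,…,y_T ∈ {1,…,d} be realized labels with targets z_t := the standard basis vector e_{y_t} ∈ ℝ^d, and suppose the EVI condition holds with tolerances ε_t ≤ G. Then for all h_1,…,h_d ∈ H₀, | Σ_{t=1}^T E_{p∼D_t}[ ⟨h_{y_t}, φ(x_t,p)⟩ − Σ_{j=1}^d p_j·⟨h_j, φ(x_t,p)⟩ ] | ≤ 4·( Σ_{j=1}^d ‖h_j‖ )·sqrt(T·G). -/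
open scoped BigOperators RealInnerProductSpace

/-- A finitely supported probability distribution, given by finitely many
weighted atoms. -/
structure FinDist (α : Type*) where
  n : ℕ
  w : Fin n → ℝ
  pt : Fin n → α
  w_nonneg : ∀ i, 0 ≤ w i
  w_sum : ∑ i, w i = 1

namespace FinDist

noncomputable def exp {α V : Type*} [AddCommMonoid V] [Module ℝ V]
    (D : FinDist α) (f : α → V) : V :=
  ∑ i, D.w i • f (D.pt i)

def support {α : Type*} (D : FinDist α) : Set α :=
  {a | ∃ i, D.w i ≠ 0 ∧ D.pt i = a}

end FinDist

section Aux

variable {α : Type*} {E : Type*} [NormedAddCommGroup E] [InnerProductSpace ℝ E]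

lemma FinDist.inner_exp (D : FinDist α) (u : E) (f : α → E) :
    (⟪u, D.exp f⟫ : ℝ) = D.exp (fun a => (⟪u, f a⟫ : ℝ)) := by
  simp [FinDist.exp, inner_sum, real_inner_smul_right, smul_eq_mul]

lemma FinDist.norm_exp_le (D : FinDist α) (f : α → E) {C : ℝ} (hC : 0 ≤ C)
    (hf : ∀ a ∈ D.support, ‖f a‖ ≤ C) : ‖D.exp f‖ ≤ C := by
  calc ‖D.exp f‖ ≤ ∑ i, ‖D.w i • f (D.pt i)‖ := norm_sum_le _ _
    _ ≤ ∑ i, D.w i * C := by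
        refine Finset.sum_le_sum fun i _ => ?_
        rw [norm_smul, Real.norm_eq_abs, abs_of_nonneg (D.w_nonneg i)]
        rcases eq_or_ne (D.w i) 0 with h0 | h0
        · simp [h0, hC]
        · exact mul_le_mul_of_nonneg_left (hf _ ⟨i, h0, rfl⟩) (D.w_nonneg i)
    _ = C := by rw [← Finset.sum_mul, D.w_sum, one_mul]

end Aux

set_option maxHeartbeats 1000000 in
/-- Corollary 4.2, multiclass outcomes: with `Z` the probability
simplex, feature map `Φ(x,p)(θ) = (θ_1 φ(x,p), …, θ_d φ(x,p)) ∈ H₀^d`, targets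
`e_{y_t}`, and EVI tolerances `ε_t ≤ G`, for all `h_1, …, h_d ∈ H₀` the OI gap
of the distinguisher `f(x,p,y) = ⟪h_y, φ(x,p)⟫` is at most
`4 (∑_j ‖h_j‖) sqrt(T G)`. -/
theorem stmt_4
    {H₀ : Type*} [NormedAddCommGroup H₀] [InnerProductSpace ℝ H₀] [CompleteSpace H₀]
    {X : Type*} [Nonempty X] {d : ℕ} (hd : 1 ≤ d)
    (φ : X → EuclideanSpace ℝ (Fin d) → H₀)
    (G : ℝ)
    (hG : ∀ (x : X), ∀ p ∈ {p : EuclideanSpace ℝ (Fin d) |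
        (∀ j, 0 ≤ p j) ∧ ∑ j, p j = 1}, ‖φ x p‖ ^ 2 ≤ G)
    (T : ℕ) (hT : 1 ≤ T)
    (x : ℕ → X) (y : ℕ → Fin d)
    (D : ℕ → FinDist (EuclideanSpace ℝ (Fin d)))
    (hD : ∀ t < T, (D t).support ⊆ {p : EuclideanSpace ℝ (Fin d) |
        (∀ j, 0 ≤ p j) ∧ ∑ j, p j = 1})
    (ε : ℕ → ℝ) (hε : ∀ t < T, 0 ≤ ε t) (hεle : ∀ t < T, ε t ≤ G)
    (hEVI : ∀ t < T, ∀ z' ∈ {p : EuclideanSpace ℝ (Fin d) |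
        (∀ j, 0 ≤ p j) ∧ ∑ j, p j = 1},
      (D t).exp (fun p =>
        (⟪(∑ τ ∈ Finset.range t, (D τ).exp (fun q =>
            (WithLp.equiv 2 (∀ _ : Fin d, H₀)).symm
              (fun j => ((EuclideanSpace.single (y τ) (1 : ℝ) - q) j) • φ (x τ) q))),
          (WithLp.equiv 2 (∀ _ : Fin d, H₀)).symm (fun j => ((z' - p) j) • φ (x t) p)⟫)) ≤ ε t)
    (h : Fin d → H₀) :
    |∑ t ∈ Finset.range T, (D t).exp (fun p =>
        (⟪h (y t), φ (x t) p⟫ - ∑ j, p j * ⟪h j, φ (x t) p⟫))| ≤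
      4 * (∑ j, ‖h j‖) * Real.sqrt ((T : ℝ) * G) := by
  classical
  obtain ⟨x₀⟩ := (inferInstance : Nonempty X)
  -- the simplex
  set S : Set (EuclideanSpace ℝ (Fin d)) :=
    {p : EuclideanSpace ℝ (Fin d) | (∀ j, 0 ≤ p j) ∧ ∑ j, p j = 1} with hSdef
  have hsingle_mem : ∀ a : Fin d, (EuclideanSpace.single a (1 : ℝ)) ∈ S := by
    intro a
    constructor
    · intro j
      simp only [EuclideanSpace.single_apply]
      split <;> norm_num
    · simp [EuclideanSpace.single_apply]
  have hG0 : 0 ≤ G :=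
    le_trans (sq_nonneg _) (hG x₀ _ (hsingle_mem ⟨0, hd⟩))
  -- abbreviations
  set v : ℕ → EuclideanSpace ℝ (Fin d) → PiLp 2 (fun _ : Fin d => H₀) := fun t p =>
    (WithLp.equiv 2 (∀ _ : Fin d, H₀)).symm
      (fun j => ((EuclideanSpace.single (y t) (1 : ℝ) - p) j) • φ (x t) p) with hvdef
  set w : ℕ → PiLp 2 (fun _ : Fin d => H₀) := fun t => (D t).exp (v t) with hwdef
  set M : ℕ → PiLp 2 (fun _ : Fin d => H₀) := fun t => ∑ τ ∈ Finset.range t, w τ with hMdef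
  set Hv : PiLp 2 (fun _ : Fin d => H₀) := (WithLp.equiv 2 (∀ _ : Fin d, H₀)).symm h
    with hHvdef
  -- pointwise inner product with Hv
  have hinner_v : ∀ t (p : EuclideanSpace ℝ (Fin d)),
      (⟪Hv, v t p⟫ : ℝ) = ⟪h (y t), φ (x t) p⟫ - ∑ j, p j * ⟪h j, φ (x t) p⟫ := by
    intro t p
    rw [hvdef, hHvdef]
    simp only [PiLp.inner_apply, WithLp.equiv_symm_apply, PiLp.toLp_apply, real_inner_smul_right,
      PiLp.sub_apply, EuclideanSpace.single_apply, sub_mul, ite_mul, one_mul, zero_mul,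
      Finset.sum_sub_distrib, Finset.sum_ite_eq', Finset.mem_univ, if_true]
  -- the LHS equals ⟪Hv, M T⟫
  have hLHS : ∑ t ∈ Finset.range T, (D t).exp (fun p =>
        (⟪h (y t), φ (x t) p⟫ - ∑ j, p j * ⟪h j, φ (x t) p⟫)) = (⟪Hv, M T⟫ : ℝ) := by
    rw [hMdef]
    simp only [inner_sum]
    refine Finset.sum_congr rfl fun t _ => ?_
    rw [hwdef, FinDist.inner_exp]
    congr 1
    funext p
    exact (hinner_v t p).symm
  -- pointwise norm bound on v
  have hv_norm_sq : ∀ t, ∀ p ∈ S, ‖v t p‖ ^ 2 ≤ 2 * G := by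
    intro t p hp
    obtain ⟨hp0, hp1⟩ := hp
    have hφ : ‖φ (x t) p‖ ^ 2 ≤ G := hG (x t) p ⟨hp0, hp1⟩
    have hcomp : ‖v t p‖ ^ 2 =
        (∑ j, ((EuclideanSpace.single (y t) (1 : ℝ) - p) j) ^ 2) * ‖φ (x t) p‖ ^ 2 := by
      rw [hvdef]
      simp only [PiLp.norm_sq_eq_of_L2, WithLp.equiv_symm_apply, PiLp.toLp_apply, norm_smul,
        Real.norm_eq_abs, mul_pow, sq_abs, Finset.sum_mul]
    rw [hcomp]
    have hple : ∀ j, p j ≤ 1 := by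
      intro j
      calc p j ≤ ∑ k, p k := Finset.single_le_sum (fun k _ => hp0 k) (Finset.mem_univ j)
        _ = 1 := hp1
    have hsum2 : (∑ j, ((EuclideanSpace.single (y t) (1 : ℝ) - p) j) ^ 2) ≤ 2 := by
      have hterm : ∀ j, ((EuclideanSpace.single (y t) (1 : ℝ) - p) j) ^ 2 =
          (if j = y t then (1 : ℝ) else 0) - 2 * (if j = y t then p j else 0) + (p j) ^ 2 := by
        intro j
        simp only [PiLp.sub_apply, EuclideanSpace.single_apply]
        split <;> ring
      simp only [hterm, Finset.sum_add_distrib, Finset.sum_sub_distrib,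
        Finset.sum_ite_eq', Finset.mem_univ, if_true, ← Finset.mul_sum]
      have hsq : ∑ j, (p j) ^ 2 ≤ 1 := by
        calc ∑ j, (p j) ^ 2 ≤ ∑ j, p j := by
              refine Finset.sum_le_sum fun j _ => ?_
              nlinarith [hp0 j, hple j]
          _ = 1 := hp1
      nlinarith [hp0 (y t), hsq]
    have h0 : (0:ℝ) ≤ ∑ j, ((EuclideanSpace.single (y t) (1 : ℝ) - p) j) ^ 2 :=
      Finset.sum_nonneg fun j _ => sq_nonneg _
    nlinarith [sq_nonneg ‖φ (x t) p‖]
  -- norm bound on w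
  have hw_norm : ∀ t < T, ‖w t‖ ≤ Real.sqrt (2 * G) := by
    intro t ht
    rw [hwdef]
    refine (D t).norm_exp_le _ (Real.sqrt_nonneg _) fun p hp => ?_
    have hpS : p ∈ S := hD t ht hp
    exact (Real.le_sqrt (norm_nonneg _) (by linarith)).mpr (hv_norm_sq t p hpS)
  have hw_sq : ∀ t < T, ‖w t‖ ^ 2 ≤ 2 * G := by
    intro t ht
    exact (Real.le_sqrt (norm_nonneg _) (by linarith)).mp (hw_norm t ht)
  -- EVI consequence
  have hMw : ∀ t < T, (⟪M t, w t⟫ : ℝ) ≤ G := by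
    intro t ht
    have hE := hEVI t ht (EuclideanSpace.single (y t) (1 : ℝ)) (hsingle_mem (y t))
    have heq : (⟪M t, w t⟫ : ℝ) = (D t).exp (fun p =>
        (⟪(∑ τ ∈ Finset.range t, (D τ).exp (fun q =>
            (WithLp.equiv 2 (∀ _ : Fin d, H₀)).symm
              (fun j => ((EuclideanSpace.single (y τ) (1 : ℝ) - q) j) • φ (x τ) q))),
          (WithLp.equiv 2 (∀ _ : Fin d, H₀)).symm
            (fun j => ((EuclideanSpace.single (y t) (1 : ℝ) - p) j) • φ (x t) p)⟫ : ℝ)) := by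
      rw [hwdef, FinDist.inner_exp]
    rw [heq]
    exact le_trans hE (hεle t ht)
  -- norm bound on M by induction
  have hM_sq : ∀ t ≤ T, ‖M t‖ ^ 2 ≤ 4 * t * G := by
    intro t
    induction t with
    | zero => intro _; simp [hMdef]
    | succ n ih =>
        intro hn
        have hn' : n < T := hn
        have hMn := ih (le_of_lt hn')
        have hstep : M (n + 1) = M n + w n := by
          rw [hMdef]; exact Finset.sum_range_succ _ _
        rw [hstep, norm_add_sq_real]
        have h1 := hMw n hn'
        have h2 := hw_sq n hn'
        push_cast
        linarith
  -- final bound on ‖M T‖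
  have hMT : ‖M T‖ ≤ 2 * Real.sqrt ((T : ℝ) * G) := by
    have h1 := hM_sq T le_rfl
    have h2 : ‖M T‖ ≤ Real.sqrt (4 * T * G) := by
      rw [show ‖M T‖ = Real.sqrt (‖M T‖ ^ 2) from (Real.sqrt_sq (norm_nonneg _)).symm]
      exact Real.sqrt_le_sqrt h1
    calc ‖M T‖ ≤ Real.sqrt (4 * T * G) := h2
      _ = 2 * Real.sqrt ((T : ℝ) * G) := by
          rw [show (4 : ℝ) * T * G = 2 ^ 2 * ((T : ℝ) * G) by ring,
            Real.sqrt_mul (by positivity), Real.sqrt_sq (by norm_num : (0:ℝ) ≤ 2)]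
  -- bound on ‖Hv‖
  have hHv : ‖Hv‖ ≤ ∑ j, ‖h j‖ := by
    have h1 : ‖Hv‖ ^ 2 = ∑ j, ‖h j‖ ^ 2 := by
      rw [hHvdef]
      simp [PiLp.norm_sq_eq_of_L2, WithLp.equiv_symm_apply, PiLp.toLp_apply]
    have h2 : ∑ j, ‖h j‖ ^ 2 ≤ (∑ j, ‖h j‖) ^ 2 :=
      Finset.sum_sq_le_sq_sum_of_nonneg fun j _ => norm_nonneg _
    have h3 : (0:ℝ) ≤ ∑ j, ‖h j‖ := Finset.sum_nonneg fun j _ => norm_nonneg _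
    nlinarith [norm_nonneg Hv]
  -- assemble
  rw [hLHS]
  have hsum0 : (0:ℝ) ≤ ∑ j, ‖h j‖ := Finset.sum_nonneg fun j _ => norm_nonneg _
  calc |(⟪Hv, M T⟫ : ℝ)| ≤ ‖Hv‖ * ‖M T‖ := abs_real_inner_le_norm _ _
    _ ≤ (∑ j, ‖h j‖) * (2 * Real.sqrt ((T : ℝ) * G)) :=
        mul_le_mul hHv hMT (norm_nonneg _) hsum0
    _ ≤ 4 * (∑ j, ‖h j‖) * Real.sqrt ((T : ℝ) * G) := by
        nlinarith [Real.sqrt_nonneg ((T : ℝ) * G)]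
end

section
/- (Corollary 4.5, scalar outcomes and moment distinguishers.) Let Y = [−1,1], let s : Y → ℝ^{2d+1} be s(y) := (1, y, y², …, y^{2d}), and let Z ⊆ ℝ^{2d+1} be the set of all vectors (∫ y⁰ dμ, …, ∫ y^{2d} dμ) as μ ranges over Borel probability measures on [−1,1]. Suppose ‖z − z′‖_2 ≤ D for all z, z′ ∈ Z and ‖Φ(x,p)‖_op² ≤ G for all x ∈ X, p ∈ Z. Let y_1,…,y_T ∈ [−1,1] be realized outcomes with targets z_t := s(y_t), and suppose the EVI condition holds with tolerances ε_t ≤ G·D²/2. Suppose for each t and each p in the support of D_t, μ_{t,p} is a finitely supported probability measure on [−1,1] with E_{ỹ∼μ_{t,p}}[s(ỹ)] = p. Then for every h ∈ H, the distinguisher f(x,p,y) := ⟨h, Φ(x,p)(s(y))⟩_H satisfies OIGap_T(f) ≤ ‖h‖_H · sqrt( Σ_{t=1}^T E_{p∼D_t}[ ‖Φ(x_t,p)(p − s(y_t))‖_H² ] + G·D²·T ). -/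
open scoped BigOperators RealInnerProductSpace
open MeasureTheory

/-- The statistic map `s(y) = (1, y, y², …, y^{2d})`. -/
noncomputable def smom (d : ℕ) (y : ℝ) : EuclideanSpace ℝ (Fin (2 * d + 1)) :=
  (WithLp.equiv 2 (∀ _ : Fin (2 * d + 1), ℝ)).symm fun i => y ^ (i : ℕ)

/-- The truncated moment set: vectors of the first `2d+1` moments
`(∫ y⁰ dμ, …, ∫ y^{2d} dμ)` of Borel probability measures on `[−1,1]`. -/
def momentSet (d : ℕ) : Set (EuclideanSpace ℝ (Fin (2 * d + 1))) :=
  {z | ∃ μ : Measure ℝ, IsProbabilityMeasure μ ∧ μ (Set.Icc (-1 : ℝ) 1)ᶜ = 0 ∧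
    ∀ i : Fin (2 * d + 1), z i = ∫ y', y' ^ (i : ℕ) ∂μ}


section Aux

open scoped RealInnerProductSpace

variable {α : Type*} {H : Type*} [NormedAddCommGroup H] [InnerProductSpace ℝ H]

lemma FinDist.exp_inner (D : FinDist α) (h : H) (f : α → H) :
    D.exp (fun a => ⟪h, f a⟫) = ⟪h, D.exp f⟫ := by
  simp [FinDist.exp, inner_sum, real_inner_smul_right]

lemma FinDist.exp_clm {V W : Type*} [NormedAddCommGroup V] [NormedSpace ℝ V]
    [NormedAddCommGroup W] [NormedSpace ℝ W]
    (D : FinDist α) (L : V →L[ℝ] W) (f : α → V) :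
    D.exp (fun a => L (f a)) = L (D.exp f) := by
  simp [FinDist.exp, map_sum, _root_.map_smul]

lemma FinDist.exp_sub {V : Type*} [AddCommGroup V] [Module ℝ V]
    (D : FinDist α) (f g : α → V) :
    D.exp (fun a => f a - g a) = D.exp f - D.exp g := by
  simp [FinDist.exp, smul_sub, Finset.sum_sub_distrib]

lemma FinDist.exp_congr {V : Type*} [AddCommMonoid V] [Module ℝ V]
    (D : FinDist α) {f g : α → V} (hfg : ∀ a ∈ D.support, f a = g a) :
    D.exp f = D.exp g := by
  unfold FinDist.exp
  refine Finset.sum_congr rfl fun i _ => ?_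
  by_cases hw : D.w i = 0
  · simp [hw]
  · rw [hfg _ ⟨i, hw, rfl⟩]

lemma FinDist.exp_nonneg (D : FinDist α) {f : α → ℝ} (hf : ∀ a, 0 ≤ f a) :
    0 ≤ D.exp f :=
  Finset.sum_nonneg fun i _ => mul_nonneg (D.w_nonneg i) (hf _)

lemma FinDist.norm_exp_sq_le (D : FinDist α) (f : α → H) :
    ‖D.exp f‖ ^ 2 ≤ D.exp (fun a => ‖f a‖ ^ 2) := by
  have h1 : ‖D.exp f‖ ≤ ∑ i, D.w i * ‖f (D.pt i)‖ := by
    refine (norm_sum_le _ _).trans_eq (Finset.sum_congr rfl fun i _ => ?_)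
    rw [norm_smul, Real.norm_eq_abs, abs_of_nonneg (D.w_nonneg i)]
  have h2 : (∑ i, D.w i * ‖f (D.pt i)‖) ^ 2 ≤
      (∑ i, D.w i) * ∑ i, D.w i * ‖f (D.pt i)‖ ^ 2 := by
    have := Finset.sum_mul_sq_le_sq_mul_sq Finset.univ
      (fun i => Real.sqrt (D.w i)) (fun i => Real.sqrt (D.w i) * ‖f (D.pt i)‖)
    calc (∑ i, D.w i * ‖f (D.pt i)‖) ^ 2
        = (∑ i, Real.sqrt (D.w i) * (Real.sqrt (D.w i) * ‖f (D.pt i)‖)) ^ 2 := by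
          congr 1; refine Finset.sum_congr rfl fun i _ => ?_
          rw [← mul_assoc, Real.mul_self_sqrt (D.w_nonneg i)]
      _ ≤ (∑ i, Real.sqrt (D.w i) ^ 2) * ∑ i, (Real.sqrt (D.w i) * ‖f (D.pt i)‖) ^ 2 := this
      _ = (∑ i, D.w i) * ∑ i, D.w i * ‖f (D.pt i)‖ ^ 2 := by
          congr 1
          · exact Finset.sum_congr rfl fun i _ => Real.sq_sqrt (D.w_nonneg i)
          · refine Finset.sum_congr rfl fun i _ => ?_
            rw [mul_pow, Real.sq_sqrt (D.w_nonneg i)]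
  calc ‖D.exp f‖ ^ 2 ≤ (∑ i, D.w i * ‖f (D.pt i)‖) ^ 2 := by
        apply pow_le_pow_left₀ (norm_nonneg _)
        exact h1.trans_eq rfl
    _ ≤ (∑ i, D.w i) * ∑ i, D.w i * ‖f (D.pt i)‖ ^ 2 := h2
    _ = D.exp (fun a => ‖f a‖ ^ 2) := by
        rw [D.w_sum, one_mul]; simp [FinDist.exp, smul_eq_mul]

lemma smom_mem_momentSet {d : ℕ} {y : ℝ} (hy : y ∈ Set.Icc (-1 : ℝ) 1) :
    smom d y ∈ momentSet d := by
  refine ⟨MeasureTheory.Measure.dirac y, by infer_instance, ?_, fun i => ?_⟩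
  · rw [MeasureTheory.Measure.dirac_apply' _ measurableSet_Icc.compl]
    simp [hy]
  · rw [MeasureTheory.integral_dirac]
    rfl

end Aux

/-- Corollary 4.5, scalar outcomes and moment distinguishers. -/
theorem stmt_6
    {H : Type*} [NormedAddCommGroup H] [InnerProductSpace ℝ H] [CompleteSpace H]
    {X : Type*} [Nonempty X] {d : ℕ} (hd : 1 ≤ d)
    (Φ : X → EuclideanSpace ℝ (Fin (2 * d + 1)) →
      (EuclideanSpace ℝ (Fin (2 * d + 1)) →L[ℝ] H))
    (Dm G : ℝ)
    (hDiam : ∀ z ∈ momentSet d, ∀ z' ∈ momentSet d, ‖z - z'‖ ≤ Dm)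
    (hG : ∀ (x : X), ∀ p ∈ momentSet d, ‖Φ x p‖ ^ 2 ≤ G)
    (T : ℕ) (hT : 1 ≤ T)
    (x : ℕ → X) (y : ℕ → ℝ) (hy : ∀ t < T, y t ∈ Set.Icc (-1 : ℝ) 1)
    (D : ℕ → FinDist (EuclideanSpace ℝ (Fin (2 * d + 1))))
    (hD : ∀ t < T, (D t).support ⊆ momentSet d)
    (ε : ℕ → ℝ) (hε : ∀ t < T, 0 ≤ ε t) (hεle : ∀ t < T, ε t ≤ G * Dm ^ 2 / 2)
    (hEVI : ∀ t < T, ∀ z' ∈ momentSet d,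
      (D t).exp (fun p =>
        (⟪(∑ τ ∈ Finset.range t, (D τ).exp (fun q => Φ (x τ) q (smom d (y τ) - q))),
          Φ (x t) p (z' - p)⟫)) ≤ ε t)
    (μ : ℕ → EuclideanSpace ℝ (Fin (2 * d + 1)) → FinDist ℝ)
    (hμY : ∀ t < T, ∀ p ∈ (D t).support, ∀ k, (μ t p).pt k ∈ Set.Icc (-1 : ℝ) 1)
    (hμ : ∀ t < T, ∀ p ∈ (D t).support, (μ t p).exp (fun y' => smom d y') = p)
    (h : H) :
    |(∑ t ∈ Finset.range T, (D t).exp (fun p => (⟪h, Φ (x t) p (smom d (y t))⟫)))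
      - (∑ t ∈ Finset.range T, (D t).exp (fun p =>
          (μ t p).exp (fun y' => (⟪h, Φ (x t) p (smom d y')⟫))))| ≤
      ‖h‖ * Real.sqrt
        ((∑ t ∈ Finset.range T,
            (D t).exp (fun p => ‖Φ (x t) p (p - smom d (y t))‖ ^ 2))
          + G * Dm ^ 2 * (T : ℝ)) := by
  classical
  -- abbreviations
  set w : ℕ → H := fun t => (D t).exp (fun q => Φ (x t) q (smom d (y t) - q)) with hw
  set B : ℕ → ℝ := fun t => (D t).exp (fun p => ‖Φ (x t) p (p - smom d (y t))‖ ^ 2) with hB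
  have hGDm : 0 ≤ G * Dm ^ 2 := by
    have h0 : smom d 0 ∈ momentSet d := smom_mem_momentSet (by norm_num)
    have hG0 := hG (Classical.arbitrary X) _ h0
    exact mul_nonneg ((sq_nonneg _).trans hG0) (sq_nonneg _)
  have hBnn : ∀ t, 0 ≤ B t := fun t => (D t).exp_nonneg fun p => sq_nonneg _
  -- norm of w t squared is at most B t
  have hwB : ∀ t, ‖w t‖ ^ 2 ≤ B t := by
    intro t
    have := (D t).norm_exp_sq_le (fun q => Φ (x t) q (smom d (y t) - q))
    refine this.trans_eq ?_
    refine (D t).exp_congr fun p _ => ?_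
    rw [← neg_sub p (smom d (y t)), map_neg, norm_neg]
  -- key martingale bound
  have hM : ∀ n ≤ T, ‖∑ τ ∈ Finset.range n, w τ‖ ^ 2 ≤
      ∑ t ∈ Finset.range n, (B t + G * Dm ^ 2) := by
    intro n hn
    induction n with
    | zero => simp
    | succ m ih =>
      have hm : m < T := hn
      have ihm := ih (le_of_lt hm)
      rw [Finset.sum_range_succ, Finset.sum_range_succ]
      have hexp : ‖(∑ τ ∈ Finset.range m, w τ) + w m‖ ^ 2 =
          ‖∑ τ ∈ Finset.range m, w τ‖ ^ 2 +
            2 * ⟪∑ τ ∈ Finset.range m, w τ, w m⟫ + ‖w m‖ ^ 2 :=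
        norm_add_sq_real _ _
      have hinner : ⟪∑ τ ∈ Finset.range m, w τ, w m⟫ ≤ G * Dm ^ 2 / 2 := by
        have heq : (D m).exp (fun p =>
            ⟪∑ τ ∈ Finset.range m, w τ, Φ (x m) p (smom d (y m) - p)⟫) =
            ⟪∑ τ ∈ Finset.range m, w τ, w m⟫ :=
          (D m).exp_inner _ _
        have := hEVI m hm (smom d (y m)) (smom_mem_momentSet (hy m hm))
        rw [heq] at this
        exact this.trans (hεle m hm)
      calc ‖(∑ τ ∈ Finset.range m, w τ) + w m‖ ^ 2
          = ‖∑ τ ∈ Finset.range m, w τ‖ ^ 2 +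
            2 * ⟪∑ τ ∈ Finset.range m, w τ, w m⟫ + ‖w m‖ ^ 2 := hexp
        _ ≤ (∑ t ∈ Finset.range m, (B t + G * Dm ^ 2)) +
            2 * (G * Dm ^ 2 / 2) + B m := by
            gcongr <;> first | exact hwB m | exact hinner
        _ = (∑ t ∈ Finset.range m, (B t + G * Dm ^ 2)) + (B m + G * Dm ^ 2) := by ring
  -- gap equals ⟪h, M_T⟫
  have hgap : (∑ t ∈ Finset.range T, (D t).exp (fun p => (⟪h, Φ (x t) p (smom d (y t))⟫)))
      - (∑ t ∈ Finset.range T, (D t).exp (fun p =>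
          (μ t p).exp (fun y' => (⟪h, Φ (x t) p (smom d y')⟫)))) =
      ⟪h, ∑ τ ∈ Finset.range T, w τ⟫ := by
    rw [inner_sum, ← Finset.sum_sub_distrib]
    refine Finset.sum_congr rfl fun t ht => ?_
    have htT : t < T := Finset.mem_range.mp ht
    rw [← (D t).exp_sub]
    have h1 : (D t).exp (fun p => ⟪h, Φ (x t) p (smom d (y t))⟫ -
        (μ t p).exp (fun y' => ⟪h, Φ (x t) p (smom d y')⟫)) =
        (D t).exp (fun p => ⟪h, Φ (x t) p (smom d (y t) - p)⟫) := by
      refine (D t).exp_congr fun p hp => ?_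
      have h2 : (μ t p).exp (fun y' => ⟪h, Φ (x t) p (smom d y')⟫) =
          ⟪h, Φ (x t) p p⟫ := by
        rw [(μ t p).exp_inner h (fun y' => Φ (x t) p (smom d y')),
          (μ t p).exp_clm (Φ (x t) p) (fun y' => smom d y'), hμ t htT p hp]
      rw [h2, map_sub, inner_sub_right]
    rw [h1, (D t).exp_inner]
  rw [hgap]
  have hsum : ∑ t ∈ Finset.range T, (B t + G * Dm ^ 2) =
      (∑ t ∈ Finset.range T, B t) + G * Dm ^ 2 * T := by
    rw [Finset.sum_add_distrib, Finset.sum_const, Finset.card_range, nsmul_eq_mul]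
    ring
  have hMT : ‖∑ τ ∈ Finset.range T, w τ‖ ≤
      Real.sqrt ((∑ t ∈ Finset.range T, B t) + G * Dm ^ 2 * T) := by
    rw [← Real.sqrt_sq (norm_nonneg (∑ τ ∈ Finset.range T, w τ))]
    exact Real.sqrt_le_sqrt (by rw [← hsum]; exact hM T le_rfl)
  calc |⟪h, ∑ τ ∈ Finset.range T, w τ⟫| ≤ ‖h‖ * ‖∑ τ ∈ Finset.range T, w τ‖ :=
        abs_real_inner_le_norm _ _
    _ ≤ ‖h‖ * Real.sqrt ((∑ t ∈ Finset.range T, B t) + G * Dm ^ 2 * T) := by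
        gcongr
    _ = _ := rfl
end
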